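/- Suppose the value function ν : P({1,…,d}) → ℝ satisfies ν(T) = ν(⌊T⌋) for every T ⊆ {1,…,d}, and suppose i ∈ {1,…,d} has no directed path to Y in G. Then the Shapley value of i is zero: φ_i = 0. -/
import Mathlib


/-- Vertex type: `some i` is the feature vertex `i`, `none` is the target vertex `Y`. -/
abbrev Vtx (d : ℕ) := Option (Fin d)

/-- `PathTo E j p` means `p` is a directed path in the graph with edge relation `E`
from the feature vertex `j` to the target vertex `Y` (encoded as `none`). -/
def PathTo {d : ℕ} (E : Vtx d → Vtx d → Prop) (j : Fin d) (p : List (Vtx d)) : Prop :=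
  p.Chain' E ∧ p.head? = some (some j) ∧ p.getLast? = some none

open Classical in
/-- The basis `⌊S⌋` of `S`: all `j ∈ S` having a directed path to `Y`
whose only vertex in `S` is `j`. -/
noncomputable def bas {d : ℕ} (E : Vtx d → Vtx d → Prop) (S : Finset (Fin d)) :
    Finset (Fin d) :=
  S.filter fun j => ∃ p : List (Vtx d), PathTo E j p ∧ ∀ i ∈ S, some i ∈ p → i = j

open Classical in
/-- The closure `⌈S⌉` of `S`: all `j ∈ {1,…,d}` such that every directed path
from `j` to `Y` contains a vertex of `S`. -/
noncomputable def clos {d : ℕ} (E : Vtx d → Vtx d → Prop) (S : Finset (Fin d)) :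
    Finset (Fin d) :=
  Finset.univ.filter fun j => ∀ p : List (Vtx d), PathTo E j p → ∃ i ∈ S, some i ∈ p

/-- The Shapley weight `p_ℓ = 1/(d ⬝ C(d-1, ℓ))`. -/
noncomputable def pShap (d ℓ : ℕ) : ℝ := 1 / ((d : ℝ) * ((d - 1).choose ℓ : ℝ))

/-- The Shapley value `φ_i = Σ_{S ⊆ [d] \ {i}} p_{|S|} (ν(S ∪ {i}) − ν(S))`. -/
noncomputable def shapley {d : ℕ} (ν : Finset (Fin d) → ℝ) (i : Fin d) : ℝ :=
  ∑ S ∈ (Finset.univ.erase i).powerset, pShap d S.card * (ν (insert i S) - ν S)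

/-- A feature with no directed path to `Y` has zero Shapley value. -/
theorem stmt13 (d : ℕ) (E : Vtx d → Vtx d → Prop)
    (hacyc : ∀ v : Vtx d, ¬ Relation.TransGen E v v)
    (hY : ∀ v : Vtx d, ¬ E none v)
    (ν : Finset (Fin d) → ℝ) (hν : ∀ T : Finset (Fin d), ν T = ν (bas E T))
    (i : Fin d) (hi : ¬ ∃ p : List (Vtx d), PathTo E i p) :
    shapley ν i = 0 := by
  have hnp : ∀ (j : Fin d) (p : List (Vtx d)), PathTo E j p → some i ∉ p := by
    intro j p hp hmem
    obtain ⟨s, t, rfl⟩ := List.append_of_mem hmem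
    apply hi
    refine ⟨some i :: t, ?_, rfl, ?_⟩
    · exact hp.1.suffix ⟨s, rfl⟩
    · rw [← hp.2.2, List.getLast?_append_cons]
  have hbas : ∀ S : Finset (Fin d), bas E (insert i S) = bas E S := by
    intro S
    ext j
    simp only [bas, Finset.mem_filter, Finset.mem_insert]
    constructor
    · rintro ⟨hj, p, hp, hall⟩
      rcases hj with rfl | hj
      · exact absurd ⟨p, hp⟩ hi
      · exact ⟨hj, p, hp, fun k hk h => hall k (Or.inr hk) h⟩
    · rintro ⟨hj, p, hp, hall⟩
      refine ⟨Or.inr hj, p, hp, ?_⟩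
      rintro k (rfl | hk) h
      · exact absurd h (hnp j p hp)
      · exact hall k hk h
  have hν2 : ∀ S : Finset (Fin d), ν (insert i S) = ν S := by
    intro S
    rw [hν (insert i S), hbas S, ← hν S]
  unfold shapley
  apply Finset.sum_eq_zero
  intro S _
  rw [hν2 S]
  ring
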